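/- Let w, w' ∈ R^d have the same sign pattern, and let i, j be indices with w_i > 0 and w_j < 0. Suppose for all t ≥ 0, sign(w_i + t·w_j) = sign(w'_i + t·w'_j). Then w'_i / w_i = w'_j / w_j. -/

import Mathlib

theorem stmt3 (d : ℕ) (w w' : Fin d → ℝ)
    (hpat : ∀ k, (0 < w k ↔ 0 < w' k) ∧ (w k < 0 ↔ w' k < 0))
    (i j : Fin d) (hi : 0 < w i) (hj : w j < 0)
    (hsign : ∀ t : ℝ, 0 ≤ t →
      Real.sign (w i + t * w j) = Real.sign (w' i + t * w' j)) :
    w' i / w i = w' j / w j := by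
  have hwj : w j ≠ 0 := ne_of_lt hj
  have hwi : w i ≠ 0 := ne_of_gt hi
  set t0 : ℝ := -(w i) / (w j) with ht0
  have ht0pos : 0 ≤ t0 := by
    apply le_of_lt
    exact div_pos_of_neg_of_neg (neg_neg_iff_pos.mpr hi) hj
  have hzero : w i + t0 * w j = 0 := by
    rw [ht0, div_mul_cancel₀ _ hwj]; ring
  have h := hsign t0 ht0pos
  rw [hzero, Real.sign_zero] at h
  have h2 : w' i + t0 * w' j = 0 := by
    by_contra hne
    rcases lt_or_gt_of_ne hne with hlt | hgt
    · rw [Real.sign_of_neg hlt] at h; norm_num at h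
    · rw [Real.sign_of_pos hgt] at h; norm_num at h
  have : w' i = (w i / w j) * w' j := by
    have : w' i = -(t0 * w' j) := by linarith
    rw [this, ht0]; ring
  rw [this]
  field_simp
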